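/- arXiv:2004.05692 — 2 statements merged into one kernel-verified Lean document; each statement's English description precedes it below -/
import Mathlib

section
/- Fix an integer N ≥ 2, a real R > 0, and a real d with 0 ≤ d ≤ 2R. Then F_N(√(4R² − d²)) = 1 − F_N(d). (The antipodal map x ↦ −x carries the set of chords of length ≤ √(4R² − d²) from a fixed point onto the set of chords of length ≥ d, and chord-length level sets are σ-null, so strict versus non-strict inequalities are immaterial.) -/
open MeasureTheory
open RealInnerProductSpace
open scoped ENNReal

lemma null_of_families {α : Type*} [MeasurableSpace α] (μ : Measure α) [IsProbabilityMeasure μ]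
    (c : ℝ≥0∞)
    (h : ∀ n : ℕ, ∃ s : Fin n → Set α, (∀ i, MeasurableSet (s i)) ∧ (∀ i, μ (s i) = c) ∧
      ∀ i j, i ≠ j → μ (s i ∩ s j) = 0) : c = 0 := by
  have key : ∀ n : ℕ, (n : ℝ≥0∞) * c ≤ 1 := by
    intro n
    obtain ⟨s, hms, hcs, hint⟩ := h n
    set t : Fin n → Set α := fun i => s i \ ⋃ j : Fin n, ⋃ _ : j < i, s j with ht
    have hmt : ∀ i, MeasurableSet (t i) :=
      fun i => (hms i).diff (MeasurableSet.iUnion fun j => MeasurableSet.iUnion fun _ => hms j)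
    have hμt : ∀ i, μ (t i) = c := by
      intro i
      have h0 : μ (⋃ j : Fin n, ⋃ _ : j < i, s i ∩ s j) = 0 :=
        measure_iUnion_null fun j => measure_iUnion_null fun hj => hint i j hj.ne'
      calc μ (t i) = μ (s i \ ⋃ j : Fin n, ⋃ _ : j < i, s i ∩ s j) := by
            congr 1; ext x; simp only [ht, Set.mem_diff, Set.mem_iUnion, Set.mem_inter_iff]; aesop
        _ = μ (s i) := measure_diff_null h0
        _ = c := hcs i
    have hdisj : Pairwise (Function.onFun Disjoint t) := by
      intro i j hij
      rcases lt_or_gt_of_ne hij with hlt | hlt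
      · refine Set.disjoint_left.2 fun x hx hx' => ?_
        exact hx'.2 (Set.mem_iUnion.2 ⟨i, Set.mem_iUnion.2 ⟨hlt, hx.1⟩⟩)
      · refine Set.disjoint_left.2 fun x hx hx' => ?_
        exact hx.2 (Set.mem_iUnion.2 ⟨j, Set.mem_iUnion.2 ⟨hlt, hx'.1⟩⟩)
    have hU : μ (⋃ i, t i) = ∑' i : Fin n, μ (t i) := measure_iUnion hdisj hmt
    have hle : ∑' i : Fin n, μ (t i) ≤ 1 := hU ▸ prob_le_one
    simpa [hμt, tsum_fintype, Finset.sum_const, Finset.card_univ, mul_comm] using hle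
  by_contra hc
  have hc1 : c ≤ 1 := by simpa using key 1
  have hct : c ≠ ⊤ := ne_top_of_le_ne_top ENNReal.one_ne_top hc1
  obtain ⟨n, hn⟩ := ENNReal.exists_nat_gt (ENNReal.inv_lt_top.2 (pos_iff_ne_zero.2 hc)).ne
  have : (1 : ℝ≥0∞) < n * c := by
    calc (1:ℝ≥0∞) = c⁻¹ * c := (ENNReal.inv_mul_cancel hc hct).symm
      _ < n * c := by
          rw [mul_comm c⁻¹ c, mul_comm (n : ℝ≥0∞) c]; exact ENNReal.mul_lt_mul_right hc hct hn
  exact absurd (key n) (not_le.2 this)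

variable {E : Type*} [NormedAddCommGroup E] [InnerProductSpace ℝ E]

noncomputable def rotMap (e w : E) (c s : ℝ) : E →ₗ[ℝ] E :=
  LinearMap.id
    + (c - 1) • ((innerSL ℝ e).toLinearMap.smulRight e + (innerSL ℝ w).toLinearMap.smulRight w)
    + s • ((innerSL ℝ e).toLinearMap.smulRight w - (innerSL ℝ w).toLinearMap.smulRight e)

lemma rotMap_apply (e w : E) (c s : ℝ) (y : E) :
    rotMap e w c s y = y + (c - 1) • (⟪e, y⟫ • e + ⟪w, y⟫ • w) + s • (⟪e, y⟫ • w - ⟪w, y⟫ • e) := by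
  simp [rotMap]

variable {e w : E}

lemma inner_e_rotMap (he : ‖e‖ = 1) (hew : ⟪e, w⟫ = 0) (c s : ℝ) (y : E) :
    ⟪e, rotMap e w c s y⟫ = c * ⟪e, y⟫ - s * ⟪w, y⟫ := by
  simp [rotMap_apply, inner_add_right, inner_smul_right, inner_sub_right,
    hew, real_inner_self_eq_norm_sq, he]
  ring

lemma inner_w_rotMap (hw : ‖w‖ = 1) (hew : ⟪e, w⟫ = 0) (c s : ℝ) (y : E) :
    ⟪w, rotMap e w c s y⟫ = c * ⟪w, y⟫ + s * ⟪e, y⟫ := by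
  have hwe : ⟪w, e⟫ = 0 := by rw [real_inner_comm]; exact hew
  simp [rotMap_apply, inner_add_right, inner_smul_right, inner_sub_right,
    hwe, real_inner_self_eq_norm_sq, hw]
  ring

lemma rot_rot (he : ‖e‖ = 1) (hw : ‖w‖ = 1) (hew : ⟪e, w⟫ = 0) (c s c' s' : ℝ) (y : E) :
    rotMap e w c s (rotMap e w c' s' y)
      = rotMap e w (c * c' - s * s') (c * s' + s * c') y := by
  have h1 := inner_e_rotMap he hew (c := c') (s := s') (y := y)
  have h2 := inner_w_rotMap hw hew (c := c') (s := s') (y := y)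
  rw [rotMap_apply, h1, h2, rotMap_apply, rotMap_apply]
  match_scalars <;> ring

lemma rotMap_one_zero (y : E) : rotMap e w 1 0 y = y := by
  simp [rotMap_apply]

lemma rotMap_norm (he : ‖e‖ = 1) (hw : ‖w‖ = 1) (hew : ⟪e, w⟫ = 0) {c s : ℝ}
    (hcs : c ^ 2 + s ^ 2 = 1) (y : E) : ‖rotMap e w c s y‖ = ‖y‖ := by
  have hwe : ⟪w, e⟫ = 0 := by rw [real_inner_comm]; exact hew
  have key : ⟪rotMap e w c s y, rotMap e w c s y⟫ = ⟪y, y⟫ := by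
    simp only [rotMap_apply, inner_add_left, inner_add_right, inner_smul_left, inner_smul_right,
      inner_sub_left, inner_sub_right, real_inner_self_eq_norm_sq, he, hw, hew, hwe,
      RCLike.star_def, starRingEnd_apply, star_trivial]
    have hye : ⟪y, e⟫ = ⟪e, y⟫ := real_inner_comm _ _
    have hyw : ⟪y, w⟫ = ⟪w, y⟫ := real_inner_comm _ _
    rw [hye, hyw]
    nlinarith [hcs]
  rw [← Real.sqrt_sq (norm_nonneg (rotMap e w c s y)), ← Real.sqrt_sq (norm_nonneg y),
    ← real_inner_self_eq_norm_sq, ← real_inner_self_eq_norm_sq, key]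

noncomputable def rotIso (he : ‖e‖ = 1) (hw : ‖w‖ = 1) (hew : ⟪e, w⟫ = 0) {c s : ℝ}
    (hcs : c ^ 2 + s ^ 2 = 1) : E ≃ₗᵢ[ℝ] E where
  toLinearEquiv := LinearEquiv.ofLinear (rotMap e w c s) (rotMap e w c (-s))
    (by ext y
        simp only [LinearMap.comp_apply, LinearMap.id_apply, LinearMap.id_coe, id_eq]
        rw [rot_rot he hw hew]
        have h1 : c * c - s * -s = 1 := by nlinarith
        have h2 : c * -s + s * c = 0 := by ring
        rw [h1, h2, rotMap_one_zero])
    (by ext y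
        simp only [LinearMap.comp_apply, LinearMap.id_apply, LinearMap.id_coe, id_eq]
        rw [rot_rot he hw hew]
        have h1 : c * c - -s * s = 1 := by nlinarith
        have h2 : c * s + -s * c = 0 := by ring
        rw [h1, h2, rotMap_one_zero])
  norm_map' := rotMap_norm he hw hew hcs

lemma rotIso_apply (he : ‖e‖ = 1) (hw : ‖w‖ = 1) (hew : ⟪e, w⟫ = 0) {c s : ℝ}
    (hcs : c ^ 2 + s ^ 2 = 1) (y : E) : rotIso he hw hew hcs y = rotMap e w c s y := rfl

lemma rotIso_fix (he : ‖e‖ = 1) (hw : ‖w‖ = 1) (hew : ⟪e, w⟫ = 0) {c s : ℝ}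
    (hcs : c ^ 2 + s ^ 2 = 1) {y : E} (h1 : ⟪e, y⟫ = 0) (h2 : ⟪w, y⟫ = 0) :
    rotIso he hw hew hcs y = y := by
  rw [rotIso_apply, rotMap_apply, h1, h2]; simp

lemma rotIso_e (he : ‖e‖ = 1) (hw : ‖w‖ = 1) (hew : ⟪e, w⟫ = 0) {c s : ℝ}
    (hcs : c ^ 2 + s ^ 2 = 1) : rotIso he hw hew hcs e = c • e + s • w := by
  have h1 : ⟪e, e⟫ = 1 := by rw [real_inner_self_eq_norm_sq, he]; norm_num
  have h2 : ⟪w, e⟫ = 0 := by rw [real_inner_comm]; exact hew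
  rw [rotIso_apply, rotMap_apply, h1, h2]
  match_scalars <;> ring

lemma exists_orth_unit [FiniteDimensional ℝ E] {k : ℕ} (hk : k < Module.finrank ℝ E)
    (f : Fin k → E) : ∃ w : E, ‖w‖ = 1 ∧ ∀ i, ⟪f i, w⟫ = 0 := by
  classical
  have hcard : (Set.range f).toFinset.card < Module.finrank ℝ E := by
    refine lt_of_le_of_lt ?_ hk
    rw [Set.toFinset_card]
    simpa using Fintype.card_range_le f
  have hK : Submodule.span ℝ (Set.range f) ≠ ⊤ := (span_lt_top_of_card_lt_finrank hcard).ne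
  have hbot : (Submodule.span ℝ (Set.range f))ᗮ ≠ ⊥ := by
    simp only [ne_eq, Submodule.orthogonal_eq_bot_iff]; exact hK
  obtain ⟨v, hv, hv0⟩ := Submodule.exists_mem_ne_zero_of_ne_bot hbot
  refine ⟨‖v‖⁻¹ • v, ?_, fun i => ?_⟩
  · rw [norm_smul, norm_inv, norm_norm, inv_mul_cancel₀ (norm_ne_zero_iff.2 hv0)]
  · rw [inner_smul_right]
    have : ⟪f i, v⟫ = 0 := hv (f i) (Submodule.subset_span (Set.mem_range_self i))
    rw [this, mul_zero]

lemma exists_angles (n : ℕ) :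
    ∃ c s : Fin n → ℝ, (∀ j, c j ^ 2 + s j ^ 2 = 1) ∧
      ∀ i j, i ≠ j → c i * s j - s i * c j ≠ 0 := by
  rcases Nat.eq_zero_or_pos n with rfl | hn
  · exact ⟨fun j => 1, fun j => 0, fun j => by norm_num, fun i j h => absurd (Subsingleton.elim i j) h⟩
  set A := Real.pi / (2 * n) with hA
  have hApos : 0 < A := by positivity
  refine ⟨fun j => Real.cos (j * A), fun j => Real.sin (j * A), fun j => by
    rw [add_comm]; exact Real.sin_sq_add_cos_sq _, ?_⟩
  have key : ∀ i j : Fin n, i < j → 0 < Real.sin ((j : ℝ) * A - (i : ℝ) * A) := by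
    intro i j hij
    apply Real.sin_pos_of_pos_of_lt_pi
    · have : (i : ℝ) < (j : ℝ) := by exact_mod_cast hij
      nlinarith
    · have hj : (j : ℝ) < n := by exact_mod_cast j.2
      have hi : (0 : ℝ) ≤ (i : ℝ) := by positivity
      have hpi : 0 < Real.pi := Real.pi_pos
      have hn' : (0 : ℝ) < n := by exact_mod_cast hn
      have : (j : ℝ) * A - (i : ℝ) * A ≤ (j : ℝ) * A := by nlinarith
      have h2 : (j : ℝ) * A < n * A := by nlinarith
      have h3 : (n : ℝ) * A = Real.pi / 2 := by rw [hA]; field_simp [hn'.ne']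
      nlinarith [Real.pi_pos]
  intro i j hij
  have hsin : Real.cos ((i:ℝ) * A) * Real.sin ((j:ℝ) * A) - Real.sin ((i:ℝ)*A) * Real.cos ((j:ℝ)*A)
      = Real.sin ((j:ℝ) * A - (i:ℝ) * A) := by
    rw [Real.sin_sub]; ring
  rw [hsin]
  rcases lt_or_gt_of_ne hij with h | h
  · exact (key i j h).ne'
  · have := key j i h
    rw [show (j:ℝ) * A - (i:ℝ) * A = -((i:ℝ) * A - (j:ℝ) * A) by ring, Real.sin_neg]
    exact neg_ne_zero.2 this.ne'

section Helpers
variable {N : ℕ}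

lemma measurableSet_innerEq (v : EuclideanSpace ℝ (Fin N)) (r : ℝ) :
    MeasurableSet {y : EuclideanSpace ℝ (Fin N) | ⟪v, y⟫ = r} :=
  (isClosed_eq (continuous_const.inner continuous_id) continuous_const).measurableSet

lemma meas_image (σ : Measure (EuclideanSpace ℝ (Fin N)))
    (hinv : ∀ O : EuclideanSpace ℝ (Fin N) ≃ₗᵢ[ℝ] EuclideanSpace ℝ (Fin N),
      Measure.map O σ = σ)
    (O : EuclideanSpace ℝ (Fin N) ≃ₗᵢ[ℝ] EuclideanSpace ℝ (Fin N))
    {A : Set (EuclideanSpace ℝ (Fin N))} (hA : MeasurableSet A) : σ (⇑O '' A) = σ A := by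
  have himg : ⇑O '' A = ⇑O.symm ⁻¹' A := by
    ext x
    constructor
    · rintro ⟨a, ha, rfl⟩; simpa using ha
    · intro hx; exact ⟨O.symm x, hx, by simp⟩
  rw [himg]
  calc σ (⇑O.symm ⁻¹' A) = Measure.map (⇑O.symm) σ A :=
        (Measure.map_apply O.symm.continuous.measurable hA).symm
    _ = σ A := by rw [hinv O.symm]

end Helpers
section Singleton
variable {N : ℕ}

lemma singleton_null (hN : 2 ≤ N) {R : ℝ} (hR : 0 < R)
    (σ : Measure (EuclideanSpace ℝ (Fin N))) [IsProbabilityMeasure σ]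
    (hsupp : σ (Metric.sphere (0 : EuclideanSpace ℝ (Fin N)) R)ᶜ = 0)
    (hinv : ∀ O : EuclideanSpace ℝ (Fin N) ≃ₗᵢ[ℝ] EuclideanSpace ℝ (Fin N),
      Measure.map O σ = σ)
    (p : EuclideanSpace ℝ (Fin N)) : σ {p} = 0 := by
  rcases eq_or_ne p 0 with rfl | hp
  · refine measure_mono_null ?_ hsupp
    intro x hx
    rw [Set.mem_singleton_iff] at hx
    subst hx
    simp only [Set.mem_compl_iff, Metric.mem_sphere, dist_self]
    exact hR.ne
  · set e : EuclideanSpace ℝ (Fin N) := ‖p‖⁻¹ • p with hedef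
    have hpn : ‖p‖ ≠ 0 := norm_ne_zero_iff.2 hp
    have he : ‖e‖ = 1 := by
      rw [hedef, norm_smul, norm_inv, norm_norm, inv_mul_cancel₀ hpn]
    obtain ⟨w, hw, hfw⟩ := exists_orth_unit (k := 1)
      (by rw [finrank_euclideanSpace_fin]; omega) (fun _ => e)
    have hew : ⟪e, w⟫ = 0 := hfw 0
    have hpe : p = ‖p‖ • e := by
      rw [hedef, smul_smul, mul_inv_cancel₀ hpn, one_smul]
    clear hedef
    clear_value e
    apply null_of_families σ
    intro n
    obtain ⟨cc, ss, hcs, hD⟩ := exists_angles n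
    have hrot : ∀ j, (rotIso he hw hew (hcs j)) p = ‖p‖ • (cc j • e + ss j • w) := by
      intro j
      conv_lhs => rw [hpe]
      rw [LinearIsometryEquiv.map_smul, rotIso_e]
    have hinner_e : ∀ j, ⟪e, (rotIso he hw hew (hcs j)) p⟫ = ‖p‖ * cc j := by
      intro j
      have hee : ⟪e, e⟫ = 1 := by rw [real_inner_self_eq_norm_sq, he]; norm_num
      rw [hrot j, inner_smul_right, inner_add_right, inner_smul_right, inner_smul_right,
        hee, hew]
      ring
    have hinner_w : ∀ j, ⟪w, (rotIso he hw hew (hcs j)) p⟫ = ‖p‖ * ss j := by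
      intro j
      have hww : ⟪w, w⟫ = 1 := by rw [real_inner_self_eq_norm_sq, hw]; norm_num
      have hwe : ⟪w, e⟫ = 0 := by rw [real_inner_comm]; exact hew
      rw [hrot j, inner_smul_right, inner_add_right, inner_smul_right, inner_smul_right,
        hww, hwe]
      ring
    refine ⟨fun j => {(rotIso he hw hew (hcs j)) p}, fun j => measurableSet_singleton _,
      fun j => ?_, ?_⟩
    · show σ {(rotIso he hw hew (hcs j)) p} = σ {p}
      rw [← Set.image_singleton, meas_image σ hinv _ (measurableSet_singleton _)]
    intro i j hij
    show σ ({(rotIso he hw hew (hcs i)) p} ∩ {(rotIso he hw hew (hcs j)) p}) = 0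
    have hne : (rotIso he hw hew (hcs i)) p ≠ (rotIso he hw hew (hcs j)) p := by
      intro heq
      have h1 : ‖p‖ * cc i = ‖p‖ * cc j := by rw [← hinner_e, ← hinner_e, heq]
      have h2 : ‖p‖ * ss i = ‖p‖ * ss j := by rw [← hinner_w, ← hinner_w, heq]
      have hc' : cc i = cc j := mul_left_cancel₀ hpn h1
      have hs' : ss i = ss j := mul_left_cancel₀ hpn h2
      exact hD i j hij (by rw [hc', hs']; ring)
    have : ({(rotIso he hw hew (hcs i)) p} ∩ {(rotIso he hw hew (hcs j)) p} :
        Set (EuclideanSpace ℝ (Fin N))) = ∅ := by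
      ext x
      simp only [Set.mem_inter_iff, Set.mem_singleton_iff, Set.mem_empty_iff_false, iff_false,
        not_and]
      rintro rfl
      exact hne
    rw [this, measure_empty]

end Singleton
section KeyInduction
variable {N : ℕ}

lemma key_induction (hN : 2 ≤ N) {R : ℝ} (hR : 0 < R)
    (σ : Measure (EuclideanSpace ℝ (Fin N))) [IsProbabilityMeasure σ]
    (hsupp : σ (Metric.sphere (0 : EuclideanSpace ℝ (Fin N)) R)ᶜ = 0)
    (hinv : ∀ O : EuclideanSpace ℝ (Fin N) ≃ₗᵢ[ℝ] EuclideanSpace ℝ (Fin N),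
      Measure.map O σ = σ)
    (m : ℕ) :
    ∀ k : ℕ, 1 ≤ k → N ≤ k + m →
      ∀ (f : Fin k → EuclideanSpace ℝ (Fin N)) (t : Fin k → ℝ), Orthonormal ℝ f →
      σ {y | ∀ i, ⟪f i, y⟫ = t i} = 0 := by
  induction m with
  | zero =>
    intro k hk1 hkN f t hf
    have hkle : k ≤ N := by
      have := hf.linearIndependent.fintype_card_le_finrank
      simpa [finrank_euclideanSpace_fin] using this
    have hkN' : k = N := by omega
    subst hkN'
    haveI : Nonempty (Fin k) := ⟨⟨0, by omega⟩⟩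
    set p : EuclideanSpace ℝ (Fin k) := ∑ i, t i • f i with hpdef
    have hfp : ∀ i, ⟪f i, p⟫ = t i := by
      intro i
      have hite := orthonormal_iff_ite.mp hf
      rw [hpdef, inner_sum]
      simp only [inner_smul_right, hite]
      simp
    have hset : {y : EuclideanSpace ℝ (Fin k) | ∀ i, ⟪f i, y⟫ = t i} = {p} := by
      ext y
      simp only [Set.mem_setOf_eq, Set.mem_singleton_iff]
      constructor
      · intro hy
        have hspan : Submodule.span ℝ (Set.range f) = ⊤ :=
          hf.linearIndependent.span_eq_top_of_card_eq_finrank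
            (by simp [finrank_euclideanSpace_fin])
        have hz : ∀ i, ⟪f i, y - p⟫ = 0 := by
          intro i; rw [inner_sub_right, hy i, hfp i, sub_self]
        have hmem : y - p ∈ Submodule.span ℝ (Set.range f) := by
          rw [hspan]; trivial
        obtain ⟨c, hc⟩ := (Submodule.mem_span_range_iff_exists_fun ℝ).1 hmem
        have : ⟪y - p, y - p⟫ = 0 := by
          nth_rewrite 1 [← hc]
          rw [sum_inner]
          refine Finset.sum_eq_zero fun i _ => ?_
          rw [real_inner_smul_left, hz i, mul_zero]
        have hyp : y - p = 0 := inner_self_eq_zero.1 this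
        exact sub_eq_zero.1 hyp
      · rintro rfl
        exact hfp
    rw [hset]
    exact singleton_null hN hR σ hsupp hinv p
  | succ m IH =>
    intro k hk1 hkN f t hf
    by_cases hNk : N ≤ k + m
    · exact IH k hk1 hNk f t hf
    have hkN' : k < N := by omega
    obtain ⟨w, hw, hfw⟩ := exists_orth_unit
      (by rw [finrank_euclideanSpace_fin]; exact hkN') f
    set j₀ : Fin k := ⟨0, by omega⟩ with hj₀
    have he : ‖f j₀‖ = 1 := hf.1 j₀
    have hew : ⟪f j₀, w⟫ = 0 := hfw j₀
    set G : Set (EuclideanSpace ℝ (Fin N)) := {y | ∀ i, ⟪f i, y⟫ = t i} with hGdef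
    have hGmeas : MeasurableSet G := by
      rw [hGdef]
      have : {y : EuclideanSpace ℝ (Fin N) | ∀ i, ⟪f i, y⟫ = t i}
          = ⋂ i, {y | ⟪f i, y⟫ = t i} := by ext y; simp
      rw [this]
      exact MeasurableSet.iInter fun i => measurableSet_innerEq _ _
    show σ G = 0
    apply null_of_families σ
    intro n
    obtain ⟨cc, ss, hcs, hD⟩ := exists_angles n
    set S : Fin n → Set (EuclideanSpace ℝ (Fin N)) := fun j =>
      {y | (∀ i, i ≠ j₀ → ⟪f i, y⟫ = t i) ∧ ⟪cc j • f j₀ + ss j • w, y⟫ = t j₀} with hSdef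
    have hSmeas : ∀ j, MeasurableSet (S j) := by
      intro j
      have : S j = (⋂ i, ⋂ (_ : i ≠ j₀), {y | ⟪f i, y⟫ = t i})
          ∩ {y | ⟪cc j • f j₀ + ss j • w, y⟫ = t j₀} := by
        ext y; simp [hSdef]
      rw [this]
      exact (MeasurableSet.iInter fun i => MeasurableSet.iInter fun _ =>
        measurableSet_innerEq _ _).inter (measurableSet_innerEq _ _)
    have hOfix : ∀ (j : Fin n) (i : Fin k), i ≠ j₀ →
        (rotIso he hw hew (hcs j)) (f i) = f i := by
      intro j i hi
      exact rotIso_fix he hw hew (hcs j) (hf.2 (Ne.symm hi)) (by rw [real_inner_comm]; exact hfw i)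
    have hSimg : ∀ j, S j = ⇑(rotIso he hw hew (hcs j)) '' G := by
      intro j
      set O := rotIso he hw hew (hcs j) with hOdef
      ext y
      simp only [hSdef, Set.mem_setOf_eq, Set.mem_image, hGdef]
      constructor
      · rintro ⟨h1, h2⟩
        refine ⟨O.symm y, fun i => ?_, O.apply_symm_apply y⟩
        by_cases hi : i = j₀
        · subst hi
          rw [← O.inner_map_map (f j₀) (O.symm y), O.apply_symm_apply, hOdef, rotIso_e]
          exact h2
        · rw [← O.inner_map_map (f i) (O.symm y), O.apply_symm_apply, hOdef, hOfix j i hi]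
          exact h1 i hi
      · rintro ⟨a, ha, rfl⟩
        constructor
        · intro i hi
          rw [← hOfix j i hi, O.inner_map_map]
          exact ha i
        · rw [hOdef, ← rotIso_e he hw hew (hcs j), ← hOdef, O.inner_map_map]
          exact ha j₀
    refine ⟨S, hSmeas, fun j => by rw [hSimg j, meas_image σ hinv _ hGmeas], ?_⟩
    intro j1 j2 hj
    have hDj := hD j1 j2 hj
    set Dv : ℝ := cc j1 * ss j2 - ss j1 * cc j2 with hDv
    set α : ℝ := t j₀ * (ss j2 - ss j1) / Dv with hα
    set β : ℝ := t j₀ * (cc j1 - cc j2) / Dv with hβ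
    have hsub : S j1 ∩ S j2 ⊆
        {y | ∀ i : Fin (k+1), ⟪(Fin.snoc f w : Fin (k+1) → EuclideanSpace ℝ (Fin N)) i, y⟫
          = (Fin.snoc (Function.update t j₀ α) β : Fin (k+1) → ℝ) i} := by
      rintro y ⟨⟨h1i, h1u⟩, ⟨h2i, h2u⟩⟩
      rw [inner_add_left, real_inner_smul_left, real_inner_smul_left] at h1u h2u
      have ha : ⟪f j₀, y⟫ = α := by
        rw [hα]
        rw [eq_div_iff hDj]
        linear_combination ss j2 * h1u - ss j1 * h2u
      have hb : ⟪w, y⟫ = β := by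
        rw [hβ]
        rw [eq_div_iff hDj]
        linear_combination cc j1 * h2u - cc j2 * h1u
      intro i
      refine Fin.lastCases ?_ (fun i' => ?_) i
      · rw [Fin.snoc_last, Fin.snoc_last]
        exact hb
      · rw [Fin.snoc_castSucc, Fin.snoc_castSucc]
        by_cases hi : i' = j₀
        · subst hi
          rw [Function.update_self]
          exact ha
        · rw [Function.update_of_ne hi]
          exact h1i i' hi
    have hsnoc : Orthonormal ℝ (Fin.snoc f w : Fin (k+1) → EuclideanSpace ℝ (Fin N)) := by
      constructor
      · intro i
        refine Fin.lastCases ?_ (fun i' => ?_) i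
        · rw [Fin.snoc_last]; exact hw
        · rw [Fin.snoc_castSucc]; exact hf.1 i'
      · intro a b hab
        induction a using Fin.lastCases with
        | last =>
          induction b using Fin.lastCases with
          | last => exact absurd rfl hab
          | cast b' => rw [Fin.snoc_last, Fin.snoc_castSucc, real_inner_comm]; exact hfw b'
        | cast a' =>
          induction b using Fin.lastCases with
          | last => rw [Fin.snoc_castSucc, Fin.snoc_last]; exact hfw a'
          | cast b' =>
            rw [Fin.snoc_castSucc, Fin.snoc_castSucc]
            exact hf.2 (fun h => hab (congrArg Fin.castSucc h))
    have hnull := IH (k+1) (by omega) (by omega) (Fin.snoc f w)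
      (Fin.snoc (Function.update t j₀ α) β) hsnoc
    exact measure_mono_null hsub hnull

end KeyInduction
section Final
variable {N : ℕ}

lemma hyperplane_null (hN : 2 ≤ N) {R : ℝ} (hR : 0 < R)
    (σ : Measure (EuclideanSpace ℝ (Fin N))) [IsProbabilityMeasure σ]
    (hsupp : σ (Metric.sphere (0 : EuclideanSpace ℝ (Fin N)) R)ᶜ = 0)
    (hinv : ∀ O : EuclideanSpace ℝ (Fin N) ≃ₗᵢ[ℝ] EuclideanSpace ℝ (Fin N),
      Measure.map O σ = σ)
    {x : EuclideanSpace ℝ (Fin N)} (hx : x ≠ 0) (r : ℝ) :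
    σ {y | ⟪x, y⟫ = r} = 0 := by
  have hxn : ‖x‖ ≠ 0 := norm_ne_zero_iff.2 hx
  have honb : Orthonormal ℝ (fun _ : Fin 1 => ‖x‖⁻¹ • x) :=
    ⟨fun i => by rw [norm_smul, norm_inv, norm_norm, inv_mul_cancel₀ hxn],
     by intro a b hab; exact absurd (Subsingleton.elim a b) hab⟩
  have hkey := key_induction hN hR σ hsupp hinv (N - 1) 1 le_rfl (by omega)
    (fun _ => ‖x‖⁻¹ • x) (fun _ => ‖x‖⁻¹ * r) honb
  have hset : {y : EuclideanSpace ℝ (Fin N) | ⟪x, y⟫ = r}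
      = {y | ∀ i : Fin 1, ⟪(fun _ : Fin 1 => ‖x‖⁻¹ • x) i, y⟫
          = (fun _ : Fin 1 => ‖x‖⁻¹ * r) i} := by
    ext y
    simp only [Set.mem_setOf_eq]
    constructor
    · intro h i; rw [real_inner_smul_left, h]
    · intro h
      have := h 0
      rw [real_inner_smul_left] at this
      exact mul_left_cancel₀ (inv_ne_zero hxn) this
  rw [hset]
  exact hkey

lemma levelset_null (hN : 2 ≤ N) {R : ℝ} (hR : 0 < R)
    (σ : Measure (EuclideanSpace ℝ (Fin N))) [IsProbabilityMeasure σ]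
    (hsupp : σ (Metric.sphere (0 : EuclideanSpace ℝ (Fin N)) R)ᶜ = 0)
    (hinv : ∀ O : EuclideanSpace ℝ (Fin N) ≃ₗᵢ[ℝ] EuclideanSpace ℝ (Fin N),
      Measure.map O σ = σ)
    (d : ℝ) :
    (σ.prod σ) {q : EuclideanSpace ℝ (Fin N) × EuclideanSpace ℝ (Fin N) |
      dist q.1 q.2 = d} = 0 := by
  have hmeas : MeasurableSet {q : EuclideanSpace ℝ (Fin N) × EuclideanSpace ℝ (Fin N) |
      dist q.1 q.2 = d} :=
    (isClosed_eq (continuous_fst.dist continuous_snd) continuous_const).measurableSet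
  rw [Measure.prod_apply hmeas]
  have hae : ∀ᵐ x ∂σ, σ (Prod.mk x ⁻¹' {q : EuclideanSpace ℝ (Fin N) ×
      EuclideanSpace ℝ (Fin N) | dist q.1 q.2 = d}) = 0 := by
    have hs : ∀ᵐ x ∂σ, x ∈ Metric.sphere (0 : EuclideanSpace ℝ (Fin N)) R := by
      rw [ae_iff]
      convert hsupp using 2
      rfl
    filter_upwards [hs] with x hx
    have hxR : ‖x‖ = R := by simpa using hx
    have hx0 : x ≠ 0 := by
      intro h; rw [h, norm_zero] at hxR; exact hR.ne hxR
    refine measure_mono_null (fun y hy => ?_)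
      (measure_union_null hsupp (hyperplane_null hN hR σ hsupp hinv hx0 ((2 * R ^ 2 - d ^ 2) / 2)))
    have hy' : dist x y = d := hy
    by_cases hyS : y ∈ Metric.sphere (0 : EuclideanSpace ℝ (Fin N)) R
    · right
      have hyR : ‖y‖ = R := by simpa using hyS
      have hns : dist x y ^ 2 = ‖x‖ ^ 2 - 2 * ⟪x, y⟫ + ‖y‖ ^ 2 := by
        rw [dist_eq_norm]; exact norm_sub_sq_real x y
      rw [hy', hxR, hyR] at hns
      show ⟪x, y⟫ = (2 * R ^ 2 - d ^ 2) / 2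
      linarith
    · left; exact hyS
  calc ∫⁻ x, σ (Prod.mk x ⁻¹' {q : EuclideanSpace ℝ (Fin N) ×
          EuclideanSpace ℝ (Fin N) | dist q.1 q.2 = d}) ∂σ
      = ∫⁻ _, 0 ∂σ := lintegral_congr_ae hae
    _ = 0 := lintegral_zero

lemma measure_eq_of_eq_on {α : Type*} [MeasurableSpace α] (μ : Measure α)
    {X Y C : Set α} (hC : μ Cᶜ = 0) (h : X ∩ C = Y ∩ C) : μ X = μ Y := by
  have key : ∀ Z W : Set α, Z ∩ C = W ∩ C → μ Z ≤ μ W := by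
    intro Z W hZW
    calc μ Z ≤ μ ((Z ∩ C) ∪ Cᶜ) := measure_mono (fun z hz => by
          by_cases hc : z ∈ C
          · exact Or.inl ⟨hz, hc⟩
          · exact Or.inr hc)
      _ ≤ μ (Z ∩ C) + μ Cᶜ := measure_union_le _ _
      _ = μ (W ∩ C) := by rw [hC, add_zero, hZW]
      _ ≤ μ W := measure_mono Set.inter_subset_left
  exact le_antisymm (key X Y h) (key Y X h.symm)

end Final
theorem stmt_3 (N : ℕ) (hN : 2 ≤ N) (R : ℝ) (hR : 0 < R)
    (σ : Measure (EuclideanSpace ℝ (Fin N))) [IsProbabilityMeasure σ]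
    (hsupp : σ (Metric.sphere (0 : EuclideanSpace ℝ (Fin N)) R)ᶜ = 0)
    (hinv : ∀ O : EuclideanSpace ℝ (Fin N) ≃ₗᵢ[ℝ] EuclideanSpace ℝ (Fin N),
      Measure.map O σ = σ)
    (d : ℝ) (hd0 : 0 ≤ d) (hd : d ≤ 2 * R) :
    ((σ.prod σ)
        {q : EuclideanSpace ℝ (Fin N) × EuclideanSpace ℝ (Fin N) |
          dist q.1 q.2 ≤ Real.sqrt (4 * R ^ 2 - d ^ 2)}).toReal
      = 1 - ((σ.prod σ)
        {q : EuclideanSpace ℝ (Fin N) × EuclideanSpace ℝ (Fin N) | dist q.1 q.2 ≤ d}).toReal := by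
  classical
  set t := Real.sqrt (4 * R ^ 2 - d ^ 2) with htdef
  have h4 : 0 ≤ 4 * R ^ 2 - d ^ 2 := by nlinarith
  have ht0 : 0 ≤ t := Real.sqrt_nonneg _
  have ht2 : t ^ 2 = 4 * R ^ 2 - d ^ 2 := Real.sq_sqrt h4
  have hmle : ∀ r : ℝ, MeasurableSet {q : EuclideanSpace ℝ (Fin N) ×
      EuclideanSpace ℝ (Fin N) | dist q.1 q.2 ≤ r} := fun r =>
    (isClosed_le (continuous_fst.dist continuous_snd) continuous_const).measurableSet
  have hmlt : MeasurableSet {q : EuclideanSpace ℝ (Fin N) ×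
      EuclideanSpace ℝ (Fin N) | dist q.1 q.2 < d} :=
    (isOpen_lt (continuous_fst.dist continuous_snd) continuous_const).measurableSet
  set On : EuclideanSpace ℝ (Fin N) ≃ₗᵢ[ℝ] EuclideanSpace ℝ (Fin N) :=
    LinearIsometryEquiv.neg ℝ with hOn
  have hmapneg : Measure.map (Prod.map id ⇑On) (σ.prod σ) = σ.prod σ := by
    rw [← Measure.map_prod_map _ _ measurable_id On.continuous.measurable,
      Measure.map_id, hinv On]
  have step1 : (σ.prod σ) {q : EuclideanSpace ℝ (Fin N) × EuclideanSpace ℝ (Fin N) |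
        dist q.1 q.2 ≤ t}
      = (σ.prod σ) (Prod.map id ⇑On ⁻¹' {q | dist q.1 q.2 ≤ t}) := by
    conv_lhs => rw [← hmapneg]
    rw [Measure.map_apply (measurable_id.prodMap On.continuous.measurable) (hmle t)]
  have hCnull : (σ.prod σ) ((Metric.sphere (0 : EuclideanSpace ℝ (Fin N)) R) ×ˢ
      (Metric.sphere (0 : EuclideanSpace ℝ (Fin N)) R))ᶜ = 0 := by
    have hsub : ((Metric.sphere (0 : EuclideanSpace ℝ (Fin N)) R) ×ˢ
        (Metric.sphere (0 : EuclideanSpace ℝ (Fin N)) R))ᶜ ⊆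
        ((Metric.sphere (0 : EuclideanSpace ℝ (Fin N)) R)ᶜ ×ˢ Set.univ) ∪
        (Set.univ ×ˢ (Metric.sphere (0 : EuclideanSpace ℝ (Fin N)) R)ᶜ) := by
      intro q hq
      rw [Set.mem_compl_iff, Set.mem_prod] at hq
      rcases not_and_or.1 hq with h | h
      · exact Or.inl ⟨h, Set.mem_univ _⟩
      · exact Or.inr ⟨Set.mem_univ _, h⟩
    refine measure_mono_null hsub (measure_union_null ?_ ?_)
    · rw [Measure.prod_prod, hsupp, zero_mul]
    · rw [Measure.prod_prod, hsupp, mul_zero]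
  have hsetAB : (Prod.map id ⇑On ⁻¹' {q : EuclideanSpace ℝ (Fin N) ×
        EuclideanSpace ℝ (Fin N) | dist q.1 q.2 ≤ t}) ∩
        ((Metric.sphere (0 : EuclideanSpace ℝ (Fin N)) R) ×ˢ
          (Metric.sphere (0 : EuclideanSpace ℝ (Fin N)) R))
      = {q : EuclideanSpace ℝ (Fin N) × EuclideanSpace ℝ (Fin N) | d ≤ dist q.1 q.2} ∩
        ((Metric.sphere (0 : EuclideanSpace ℝ (Fin N)) R) ×ˢ
          (Metric.sphere (0 : EuclideanSpace ℝ (Fin N)) R)) := by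
    ext q
    simp only [Set.mem_inter_iff, Set.mem_preimage, Set.mem_prod, Set.mem_setOf_eq,
      Prod.map_apply, id_eq, mem_sphere_iff_norm, sub_zero]
    constructor
    · rintro ⟨h1, hq1, hq2⟩
      refine ⟨?_, hq1, hq2⟩
      replace h1 : dist q.1 (On q.2) ≤ t := h1
      have hda : dist q.1 (On q.2) = ‖q.1 + q.2‖ := by
        rw [hOn]
        simp only [LinearIsometryEquiv.coe_neg]
        rw [dist_eq_norm, sub_neg_eq_add]
      have hsum : ‖q.1 + q.2‖ ^ 2 + ‖q.1 - q.2‖ ^ 2 = 4 * R ^ 2 := by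
        have ha := norm_add_sq_real q.1 q.2
        have hb := norm_sub_sq_real q.1 q.2
        rw [hq1, hq2] at ha hb
        linarith
      rw [hda] at h1
      have hsq : ‖q.1 + q.2‖ ^ 2 ≤ t ^ 2 := by
        have := pow_le_pow_left₀ (norm_nonneg _) h1 2
        exact this
      have hd2 : d ^ 2 ≤ ‖q.1 - q.2‖ ^ 2 := by linarith [ht2]
      rw [dist_eq_norm]
      nlinarith [norm_nonneg (q.1 - q.2)]
    · rintro ⟨h1, hq1, hq2⟩
      refine ⟨?_, hq1, hq2⟩
      have hda : dist q.1 (On q.2) = ‖q.1 + q.2‖ := by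
        rw [hOn]
        simp only [LinearIsometryEquiv.coe_neg]
        rw [dist_eq_norm, sub_neg_eq_add]
      have hsum : ‖q.1 + q.2‖ ^ 2 + ‖q.1 - q.2‖ ^ 2 = 4 * R ^ 2 := by
        have ha := norm_add_sq_real q.1 q.2
        have hb := norm_sub_sq_real q.1 q.2
        rw [hq1, hq2] at ha hb
        linarith
      rw [dist_eq_norm] at h1
      have hsq : d ^ 2 ≤ ‖q.1 - q.2‖ ^ 2 := pow_le_pow_left₀ hd0 h1 2
      have h2 : ‖q.1 + q.2‖ ^ 2 ≤ t ^ 2 := by linarith [ht2]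
      show dist q.1 (On q.2) ≤ t
      rw [hda]
      nlinarith [norm_nonneg (q.1 + q.2)]
  have step2 : (σ.prod σ) (Prod.map id ⇑On ⁻¹' {q : EuclideanSpace ℝ (Fin N) ×
        EuclideanSpace ℝ (Fin N) | dist q.1 q.2 ≤ t})
      = (σ.prod σ) {q : EuclideanSpace ℝ (Fin N) × EuclideanSpace ℝ (Fin N) |
          d ≤ dist q.1 q.2} :=
    measure_eq_of_eq_on _ hCnull hsetAB
  have step3 : {q : EuclideanSpace ℝ (Fin N) × EuclideanSpace ℝ (Fin N) | d ≤ dist q.1 q.2}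
      = {q : EuclideanSpace ℝ (Fin N) × EuclideanSpace ℝ (Fin N) | dist q.1 q.2 < d}ᶜ := by
    ext q; simp [not_lt]
  have step4 : (σ.prod σ) {q : EuclideanSpace ℝ (Fin N) ×
        EuclideanSpace ℝ (Fin N) | dist q.1 q.2 < d}ᶜ
      = 1 - (σ.prod σ) {q : EuclideanSpace ℝ (Fin N) ×
        EuclideanSpace ℝ (Fin N) | dist q.1 q.2 < d} :=
    prob_compl_eq_one_sub hmlt
  have step5 : (σ.prod σ) {q : EuclideanSpace ℝ (Fin N) ×
        EuclideanSpace ℝ (Fin N) | dist q.1 q.2 ≤ d}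
      = (σ.prod σ) {q : EuclideanSpace ℝ (Fin N) ×
        EuclideanSpace ℝ (Fin N) | dist q.1 q.2 < d} := by
    have hu : {q : EuclideanSpace ℝ (Fin N) × EuclideanSpace ℝ (Fin N) | dist q.1 q.2 ≤ d}
        = {q : EuclideanSpace ℝ (Fin N) × EuclideanSpace ℝ (Fin N) | dist q.1 q.2 < d} ∪
          {q : EuclideanSpace ℝ (Fin N) × EuclideanSpace ℝ (Fin N) | dist q.1 q.2 = d} := by
      ext q
      simp only [Set.mem_setOf_eq, Set.mem_union]
      exact le_iff_lt_or_eq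
    rw [hu]
    apply le_antisymm
    · calc (σ.prod σ) (_ ∪ _) ≤ (σ.prod σ) {q : EuclideanSpace ℝ (Fin N) ×
            EuclideanSpace ℝ (Fin N) | dist q.1 q.2 < d} + (σ.prod σ)
            {q : EuclideanSpace ℝ (Fin N) × EuclideanSpace ℝ (Fin N) | dist q.1 q.2 = d} :=
          measure_union_le _ _
        _ = (σ.prod σ) {q : EuclideanSpace ℝ (Fin N) ×
            EuclideanSpace ℝ (Fin N) | dist q.1 q.2 < d} := by
          rw [levelset_null hN hR σ hsupp hinv d, add_zero]
    · exact measure_mono Set.subset_union_left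
  have main : (σ.prod σ) {q : EuclideanSpace ℝ (Fin N) ×
        EuclideanSpace ℝ (Fin N) | dist q.1 q.2 ≤ t}
      = 1 - (σ.prod σ) {q : EuclideanSpace ℝ (Fin N) ×
        EuclideanSpace ℝ (Fin N) | dist q.1 q.2 ≤ d} := by
    rw [step1, step2, step3, step4, step5]
  rw [main, ENNReal.toReal_sub_of_le prob_le_one ENNReal.one_ne_top, ENNReal.toReal_one]
end

section
/- Fix an integer N ≥ 2 and a real R > 0. For every d with 0 ≤ d ≤ √2·R, the hyper-hemisphere chord length CDF dominates the hypersphere chord length CDF: F_{NH}(d) ≥ F_N(d). -/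
open MeasureTheory

/-- The hemisphere: points of the sphere of radius `R` in `ℝ^N` with nonnegative
last coordinate. -/
def hemiset (N : ℕ) (hN : 2 ≤ N) (R : ℝ) : Set (EuclideanSpace ℝ (Fin N)) :=
  {x | ‖x‖ = R ∧ 0 ≤ x ⟨N - 1, by omega⟩}

/-- The uniform probability measure on the hemisphere: the restriction of `σ` to the
hemisphere, normalized to a probability measure. -/
noncomputable def hemiMeasure (N : ℕ) (hN : 2 ≤ N) (R : ℝ)
    (σ : Measure (EuclideanSpace ℝ (Fin N))) : Measure (EuclideanSpace ℝ (Fin N)) :=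
  (σ (hemiset N hN R))⁻¹ • σ.restrict (hemiset N hN R)

namespace Stmt11Aux

variable {N : ℕ}

noncomputable def rotFun (a b : Fin N) (θ : ℝ) (x : EuclideanSpace ℝ (Fin N)) :
    EuclideanSpace ℝ (Fin N) :=
  WithLp.toLp 2 fun j => if j = a then Real.cos θ * x a - Real.sin θ * x b
    else if j = b then Real.sin θ * x a + Real.cos θ * x b
    else x j

lemma rotFun_a (a b : Fin N) (θ : ℝ) (x : EuclideanSpace ℝ (Fin N)) :
    rotFun a b θ x a = Real.cos θ * x a - Real.sin θ * x b := by simp [rotFun]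

lemma rotFun_b (a b : Fin N) (hab : a ≠ b) (θ : ℝ) (x : EuclideanSpace ℝ (Fin N)) :
    rotFun a b θ x b = Real.sin θ * x a + Real.cos θ * x b := by
  simp [rotFun, hab.symm]

lemma rotFun_other (a b : Fin N) (θ : ℝ) (x : EuclideanSpace ℝ (Fin N)) {j : Fin N}
    (hja : j ≠ a) (hjb : j ≠ b) : rotFun a b θ x j = x j := by
  simp [rotFun, hja, hjb]

lemma rotFun_inv (a b : Fin N) (hab : a ≠ b) (θ : ℝ) (x : EuclideanSpace ℝ (Fin N)) :
    rotFun a b (-θ) (rotFun a b θ x) = x := by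
  ext j
  rcases eq_or_ne j a with rfl | hja
  · rw [rotFun_a, rotFun_a, rotFun_b _ _ hab, Real.cos_neg, Real.sin_neg]
    linear_combination (x j) * Real.sin_sq_add_cos_sq θ
  rcases eq_or_ne j b with rfl | hjb
  · rw [rotFun_b _ _ hab, rotFun_a, rotFun_b _ _ hab, Real.cos_neg, Real.sin_neg]
    linear_combination (x j) * Real.sin_sq_add_cos_sq θ
  · rw [rotFun_other _ _ _ _ hja hjb, rotFun_other _ _ _ _ hja hjb]

lemma sum_split (a b : Fin N) (hab : a ≠ b) (g : Fin N → ℝ) :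
    ∑ j, g j = (∑ j ∈ (Finset.univ.erase a).erase b, g j) + g b + g a := by
  rw [Finset.sum_erase_add _ _ (Finset.mem_erase.mpr ⟨hab.symm, Finset.mem_univ b⟩),
    Finset.sum_erase_add _ _ (Finset.mem_univ a)]

lemma sum_sq_rotFun (a b : Fin N) (hab : a ≠ b) (θ : ℝ) (x : EuclideanSpace ℝ (Fin N)) :
    ∑ j, (rotFun a b θ x j) ^ 2 = ∑ j, (x j) ^ 2 := by
  rw [sum_split a b hab, sum_split a b hab (fun j => (x j) ^ 2)]
  have h : ∀ j ∈ (Finset.univ.erase a).erase b, (rotFun a b θ x j) ^ 2 = (x j) ^ 2 := by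
    intro j hj
    rw [Finset.mem_erase, Finset.mem_erase] at hj
    rw [rotFun_other _ _ _ _ hj.2.1 hj.1]
  rw [Finset.sum_congr rfl h, rotFun_a, rotFun_b _ _ hab]
  linear_combination (x a ^ 2 + x b ^ 2) * Real.sin_sq_add_cos_sq θ

noncomputable def rotE (a b : Fin N) (hab : a ≠ b) (θ : ℝ) :
    EuclideanSpace ℝ (Fin N) ≃ₗᵢ[ℝ] EuclideanSpace ℝ (Fin N) :=
  { toFun := rotFun a b θ
    invFun := rotFun a b (-θ)
    map_add' := fun x y => by
      ext j
      simp only [rotFun, PiLp.add_apply, PiLp.toLp_apply]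
      split_ifs <;> ring
    map_smul' := fun c x => by
      ext j
      simp only [rotFun, PiLp.toLp_apply, PiLp.smul_apply, smul_eq_mul, RingHom.id_apply]
      split_ifs <;> ring
    left_inv := fun x => rotFun_inv a b hab θ x
    right_inv := fun x => by
      have := rotFun_inv a b hab (-θ) x
      rwa [neg_neg] at this
    norm_map' := fun x => by
      rw [EuclideanSpace.norm_eq, EuclideanSpace.norm_eq]
      congr 1
      simp only [Real.norm_eq_abs, sq_abs]
      exact sum_sq_rotFun a b hab θ x }

lemma rotE_apply (a b : Fin N) (hab : a ≠ b) (θ : ℝ) (x : EuclideanSpace ℝ (Fin N)) :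
    rotE a b hab θ x = rotFun a b θ x := rfl

noncomputable def flipFun (l : Fin N) (x : EuclideanSpace ℝ (Fin N)) :
    EuclideanSpace ℝ (Fin N) :=
  WithLp.toLp 2 fun j => if j = l then -x j else x j

lemma flipFun_l (l : Fin N) (x : EuclideanSpace ℝ (Fin N)) : flipFun l x l = -x l := by
  simp [flipFun]

lemma flipFun_inv (l : Fin N) (x : EuclideanSpace ℝ (Fin N)) :
    flipFun l (flipFun l x) = x := by
  ext j
  simp only [flipFun]
  split_ifs <;> simp

noncomputable def flipE (l : Fin N) :
    EuclideanSpace ℝ (Fin N) ≃ₗᵢ[ℝ] EuclideanSpace ℝ (Fin N) :=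
  { toFun := flipFun l
    invFun := flipFun l
    map_add' := fun x y => by
      ext j; simp only [flipFun, PiLp.add_apply, PiLp.toLp_apply]; split_ifs <;> ring
    map_smul' := fun c x => by
      ext j
      simp only [flipFun, PiLp.toLp_apply, PiLp.smul_apply, smul_eq_mul, RingHom.id_apply]
      split_ifs <;> ring
    left_inv := flipFun_inv l
    right_inv := flipFun_inv l
    norm_map' := fun x => by
      rw [EuclideanSpace.norm_eq, EuclideanSpace.norm_eq]
      congr 1
      refine Finset.sum_congr rfl fun j _ => ?_
      simp only [Real.norm_eq_abs, sq_abs]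
      show (flipFun l x j) ^ 2 = (x j) ^ 2
      simp only [flipFun, PiLp.toLp_apply]
      split_ifs <;> ring }

lemma flipE_apply (l : Fin N) (x : EuclideanSpace ℝ (Fin N)) : flipE l x = flipFun l x := rfl

lemma dist_flip_le (l : Fin N) (x y : EuclideanSpace ℝ (Fin N))
    (hx : x l ≤ 0) (hy : 0 ≤ y l) :
    dist (flipFun l x) y ≤ dist x y := by
  rw [EuclideanSpace.dist_eq, EuclideanSpace.dist_eq]
  apply Real.sqrt_le_sqrt
  apply Finset.sum_le_sum
  intro j _
  rw [Real.dist_eq, Real.dist_eq, sq_abs, sq_abs]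
  rcases eq_or_ne j l with rfl | hj
  · rw [flipFun_l]
    nlinarith [mul_nonpos_of_nonpos_of_nonneg hx hy]
  · simp [flipFun, hj]

lemma proj_continuous (l : Fin N) : Continuous fun x : EuclideanSpace ℝ (Fin N) => x l :=
  (EuclideanSpace.proj (𝕜 := ℝ) l).continuous

lemma slice_null (N : ℕ) (hN : 2 ≤ N) (R : ℝ) (hR : 0 < R)
    (σ : Measure (EuclideanSpace ℝ (Fin N))) [IsProbabilityMeasure σ]
    (hinv : ∀ O : EuclideanSpace ℝ (Fin N) ≃ₗᵢ[ℝ] EuclideanSpace ℝ (Fin N),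
      Measure.map O σ = σ) :
    σ {x : EuclideanSpace ℝ (Fin N) | ‖x‖ = R ∧ x ⟨N - 1, by omega⟩ = 0} = 0 := by
  set A : ℕ → Set (EuclideanSpace ℝ (Fin N)) :=
    fun k => {x | ‖x‖ = R ∧ ∀ j : Fin N, k ≤ (j : ℕ) → x j = 0} with hA
  have hAm : ∀ k, MeasurableSet (A k) := by
    intro k
    have h1 : IsClosed {x : EuclideanSpace ℝ (Fin N) | ‖x‖ = R} :=
      isClosed_eq continuous_norm continuous_const
    have h2 : IsClosed {x : EuclideanSpace ℝ (Fin N) | ∀ j : Fin N, k ≤ (j : ℕ) → x j = 0} := by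
      have he : {x : EuclideanSpace ℝ (Fin N) | ∀ j : Fin N, k ≤ (j : ℕ) → x j = 0}
          = ⋂ (j : Fin N) (_ : k ≤ (j : ℕ)), {x : EuclideanSpace ℝ (Fin N) | x j = 0} := by
        ext x; simp
      rw [he]
      exact isClosed_iInter fun j => isClosed_iInter fun _ =>
        isClosed_eq (proj_continuous j) continuous_const
    exact (h1.inter h2).measurableSet
  have hmap : ∀ (O : EuclideanSpace ℝ (Fin N) ≃ₗᵢ[ℝ] EuclideanSpace ℝ (Fin N))
      (s : Set (EuclideanSpace ℝ (Fin N))), MeasurableSet s → σ (⇑O ⁻¹' s) = σ s := by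
    intro O s hs
    conv_rhs => rw [← hinv O]
    rw [Measure.map_apply O.continuous.measurable hs]
  have step : ∀ k, k + 1 < N → σ (A (k + 1)) ≤ σ (A k) := by
    intro k hk
    by_contra hlt
    push_neg at hlt
    set a : Fin N := ⟨k, by omega⟩ with ha
    set b : Fin N := ⟨k + 1, hk⟩ with hb
    have hab : a ≠ b := by simp [ha, hb, Fin.ext_iff]
    set B : ℝ → Set (EuclideanSpace ℝ (Fin N)) :=
      fun θ => ⇑(rotE a b hab (-θ)) ⁻¹' (A (k + 1)) \ A k with hB
    have hBm : ∀ θ, MeasurableSet (B θ) := fun θ =>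
      ((hAm _).preimage (rotE a b hab (-θ)).continuous.measurable).diff (hAm _)
    have hBpos : ∀ θ, 0 < σ (B θ) := by
      intro θ
      rcases Classical.em (σ (B θ) = 0) with h0 | h0
      · exfalso
        have h1 : σ (⇑(rotE a b hab (-θ)) ⁻¹' (A (k + 1))) = σ (A (k + 1)) :=
          hmap _ _ (hAm _)
        have h2 : σ (A (k + 1)) ≤ σ (B θ) + σ (A k) := by
          rw [← h1]
          refine le_trans (measure_mono ?_) (measure_union_le _ _)
          intro x hx
          rcases Classical.em (x ∈ A k) with h | h
          · exact Or.inr h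
          · exact Or.inl ⟨hx, h⟩
        rw [h0, zero_add] at h2
        exact absurd h2 (not_le.mpr hlt)
      · exact pos_iff_ne_zero.mpr h0
    have hmem : ∀ θ x, x ∈ ⇑(rotE a b hab (-θ)) ⁻¹' (A (k + 1)) →
        (‖x‖ = R ∧ (∀ j : Fin N, k + 2 ≤ (j : ℕ) → x j = 0) ∧
          Real.sin θ * x a = Real.cos θ * x b) := by
      intro θ x hx
      simp only [Set.mem_preimage, hA, Set.mem_setOf_eq] at hx
      obtain ⟨hxn, hxz⟩ := hx
      rw [(rotE a b hab (-θ)).norm_map] at hxn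
      refine ⟨hxn, ?_, ?_⟩
      · intro j hj
        have hja : j ≠ a := by simp [ha, Fin.ext_iff]; omega
        have hjb : j ≠ b := by simp [hb, Fin.ext_iff]; omega
        have := hxz j (by omega)
        rwa [rotE_apply, rotFun_other _ _ _ _ hja hjb] at this
      · have := hxz b (by simp [hb])
        rw [rotE_apply, rotFun_b _ _ hab, Real.sin_neg, Real.cos_neg] at this
        linarith
    have hdisj : Pairwise (Function.onFun Disjoint
        fun θ : ↥(Set.Ioo (0 : ℝ) Real.pi) => B θ) := by
      intro θ θ' hne
      rw [Function.onFun]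
      rw [Set.disjoint_left]
      rintro x ⟨hx1, hx2⟩ ⟨hx1', _⟩
      apply hx2
      obtain ⟨hxn, hz, e1⟩ := hmem _ x hx1
      obtain ⟨_, _, e2⟩ := hmem _ x hx1'
      obtain ⟨ht1, ht2⟩ := θ.2
      obtain ⟨ht1', ht2'⟩ := θ'.2
      have hs : Real.sin ((θ' : ℝ) - θ) ≠ 0 := by
        intro h
        rw [Real.sin_eq_zero_iff_of_lt_of_lt (by linarith) (by linarith)] at h
        exact hne (Subtype.ext (by linarith))
      have hxa : x a = 0 := by
        have h : x a * Real.sin ((θ' : ℝ) - θ) = 0 := by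
          rw [Real.sin_sub]
          linear_combination Real.cos (θ : ℝ) * e2 - Real.cos (θ' : ℝ) * e1
        rcases mul_eq_zero.mp h with h | h
        · exact h
        · exact absurd h hs
      have hxb : x b = 0 := by
        have h : x b * Real.sin ((θ' : ℝ) - θ) = 0 := by
          rw [Real.sin_sub]
          linear_combination Real.sin (θ : ℝ) * e2 - Real.sin (θ' : ℝ) * e1
        rcases mul_eq_zero.mp h with h | h
        · exact h
        · exact absurd h hs
      simp only [hA, Set.mem_setOf_eq]
      refine ⟨hxn, fun j hj => ?_⟩
      rcases eq_or_ne j a with rfl | hja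
      · exact hxa
      rcases eq_or_ne j b with rfl | hjb
      · exact hxb
      · apply hz
        have h1 : (j : ℕ) ≠ k := by simpa [ha, Fin.ext_iff] using hja
        have h2 : (j : ℕ) ≠ k + 1 := by simpa [hb, Fin.ext_iff] using hjb
        omega
    have hcnt := Measure.countable_meas_pos_of_disjoint_iUnion (μ := σ)
      (As := fun θ : ↥(Set.Ioo (0 : ℝ) Real.pi) => B θ) (fun θ => hBm θ) hdisj
    have huniv : {i : ↥(Set.Ioo (0 : ℝ) Real.pi) | 0 < σ (B i)} = Set.univ := by
      ext i; simp [hBpos]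
    rw [huniv] at hcnt
    have : (Set.Ioo (0 : ℝ) Real.pi).Countable := by
      rw [← Set.countable_coe_iff]
      exact Set.countable_univ_iff.mp hcnt
    have h0 := this.measure_zero MeasureTheory.volume
    rw [Real.volume_Ioo] at h0
    simp only [sub_zero] at h0
    have hpos : (0 : ENNReal) < ENNReal.ofReal Real.pi :=
      ENNReal.ofReal_pos.mpr Real.pi_pos
    rw [h0] at hpos
    exact lt_irrefl _ hpos
  have hA0 : σ (A 0) = 0 := by
    have hsub : A 0 ⊆ (∅ : Set (EuclideanSpace ℝ (Fin N))) := by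
      intro x hx
      exfalso
      have hx0 : x = 0 := by ext j; exact hx.2 j (Nat.zero_le _)
      have := hx.1
      rw [hx0, norm_zero] at this
      linarith
    exact measure_mono_null hsub measure_empty
  have hchain : ∀ m, m ≤ N - 1 → σ (A m) = 0 := by
    intro m
    induction m with
    | zero => intro _; exact hA0
    | succ n ih =>
      intro hm
      have h1 : n + 1 < N := by omega
      exact le_antisymm (le_trans (step n h1) (le_of_eq (ih (by omega)))) zero_le
  have hset : {x : EuclideanSpace ℝ (Fin N) | ‖x‖ = R ∧ x ⟨N - 1, by omega⟩ = 0}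
      = A (N - 1) := by
    ext x
    simp only [hA, Set.mem_setOf_eq]
    constructor
    · rintro ⟨h1, h2⟩
      refine ⟨h1, fun j hj => ?_⟩
      have hjv : (j : ℕ) = N - 1 := by have := j.isLt; omega
      have hje : j = (⟨N - 1, by omega⟩ : Fin N) := Fin.ext (by simp [hjv])
      rwa [hje]
    · rintro ⟨h1, h2⟩
      exact ⟨h1, h2 _ (le_refl _)⟩
  rw [hset]
  exact hchain (N - 1) le_rfl

end Stmt11Aux

theorem stmt_11 (N : ℕ) (hN : 2 ≤ N) (R : ℝ) (hR : 0 < R)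
    (σ : Measure (EuclideanSpace ℝ (Fin N))) [IsProbabilityMeasure σ]
    (hsupp : σ (Metric.sphere (0 : EuclideanSpace ℝ (Fin N)) R)ᶜ = 0)
    (hinv : ∀ O : EuclideanSpace ℝ (Fin N) ≃ₗᵢ[ℝ] EuclideanSpace ℝ (Fin N),
      Measure.map O σ = σ)
    (d : ℝ) (hd0 : 0 ≤ d) (hd : d ≤ Real.sqrt 2 * R) :
    ((σ.prod σ)
        {q : EuclideanSpace ℝ (Fin N) × EuclideanSpace ℝ (Fin N) | dist q.1 q.2 ≤ d}).toReal
      ≤ (((hemiMeasure N hN R σ).prod (hemiMeasure N hN R σ))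
        {q : EuclideanSpace ℝ (Fin N) × EuclideanSpace ℝ (Fin N) | dist q.1 q.2 ≤ d}).toReal := by
  classical
  set l : Fin N := ⟨N - 1, by omega⟩ with hl
  set f : EuclideanSpace ℝ (Fin N) ≃ₗᵢ[ℝ] EuclideanSpace ℝ (Fin N) := Stmt11Aux.flipE l with hf
  set H : Set (EuclideanSpace ℝ (Fin N)) := hemiset N hN R with hHdef
  set M : Set (EuclideanSpace ℝ (Fin N)) := {x | ‖x‖ = R ∧ x l ≤ 0} with hMdef
  set D : Set (EuclideanSpace ℝ (Fin N) × EuclideanSpace ℝ (Fin N)) :=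
    {q | dist q.1 q.2 ≤ d} with hDdef
  have hproj : Continuous fun x : EuclideanSpace ℝ (Fin N) => x l :=
    Stmt11Aux.proj_continuous l
  have hHm : MeasurableSet H :=
    ((isClosed_eq continuous_norm continuous_const).inter
      (isClosed_le continuous_const hproj)).measurableSet
  have hMm : MeasurableSet M :=
    ((isClosed_eq continuous_norm continuous_const).inter
      (isClosed_le hproj continuous_const)).measurableSet
  have hDm : MeasurableSet D :=
    (isClosed_le (continuous_fst.dist continuous_snd) continuous_const).measurableSet
  have hmap : ∀ (O : EuclideanSpace ℝ (Fin N) ≃ₗᵢ[ℝ] EuclideanSpace ℝ (Fin N))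
      (s : Set (EuclideanSpace ℝ (Fin N))), MeasurableSet s → σ (⇑O ⁻¹' s) = σ s := by
    intro O s hs
    conv_rhs => rw [← hinv O]
    rw [Measure.map_apply O.continuous.measurable hs]
  have hMpre : ⇑f ⁻¹' H = M := by
    ext x
    simp only [Set.mem_preimage, hHdef, hemiset, hMdef, Set.mem_setOf_eq]
    rw [f.norm_map]
    rw [hf, Stmt11Aux.flipE_apply, Stmt11Aux.flipFun_l]
    rw [neg_nonneg]
  have hE0 : σ {x : EuclideanSpace ℝ (Fin N) | ‖x‖ = R ∧ x l = 0} = 0 :=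
    Stmt11Aux.slice_null N hN R hR σ hinv
  have hSset : {x : EuclideanSpace ℝ (Fin N) | ‖x‖ = R} = Metric.sphere 0 R := by
    ext x; simp [mem_sphere_zero_iff_norm]
  have hS1 : σ {x : EuclideanSpace ℝ (Fin N) | ‖x‖ = R} = 1 := by
    rw [hSset]
    have hms : MeasurableSet (Metric.sphere (0 : EuclideanSpace ℝ (Fin N)) R) :=
      Metric.isClosed_sphere.measurableSet
    have h := measure_add_measure_compl (μ := σ) hms
    rw [hsupp, add_zero, measure_univ] at h
    exact h
  have hMH : σ M = σ H := by rw [← hMpre]; exact hmap f H hHm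
  have hHMu : H ∪ M = {x : EuclideanSpace ℝ (Fin N) | ‖x‖ = R} := by
    ext x
    simp only [Set.mem_union, hHdef, hemiset, hMdef, Set.mem_setOf_eq]
    constructor
    · rintro (⟨h1, _⟩ | ⟨h1, _⟩) <;> exact h1
    · intro h1
      rcases le_total 0 (x l) with h | h
      · exact Or.inl ⟨h1, h⟩
      · exact Or.inr ⟨h1, h⟩
  have hHMi : H ∩ M = {x : EuclideanSpace ℝ (Fin N) | ‖x‖ = R ∧ x l = 0} := by
    ext x
    simp only [Set.mem_inter_iff, hHdef, hemiset, hMdef, Set.mem_setOf_eq]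
    constructor
    · rintro ⟨⟨h1, h2⟩, ⟨_, h3⟩⟩
      exact ⟨h1, le_antisymm h3 h2⟩
    · rintro ⟨h1, h2⟩
      exact ⟨⟨h1, h2.ge⟩, ⟨h1, h2.le⟩⟩
  have hkey : σ H + σ M = 1 := by
    rw [← measure_union_add_inter H hMm, hHMu, hHMi, hS1, hE0, add_zero]
  have hH2 : σ H = 2⁻¹ := by
    rw [hMH, ← two_mul] at hkey
    calc σ H = 2⁻¹ * (2 * σ H) := by
          rw [← mul_assoc, ENNReal.inv_mul_cancel (by norm_num) (by norm_num), one_mul]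
      _ = 2⁻¹ := by rw [hkey, mul_one]
  have hhemi : hemiMeasure N hN R σ = σ.restrict H + σ.restrict H := by
    simp only [hemiMeasure]
    rw [← hHdef, hH2, inv_inv, two_smul]
  set μ2 := σ.prod σ with hμ2
  set ν := (σ.restrict H).prod (σ.restrict H) with hν
  have hRHS : (hemiMeasure N hN R σ).prod (hemiMeasure N hN R σ) D
      = ν D + ν D + (ν D + ν D) := by
    simp only [hhemi, Measure.add_prod, Measure.prod_add, Measure.add_apply, hν]
  have hνD : ν D = μ2 (D ∩ H ×ˢ H) := by
    rw [hν, Measure.prod_restrict, Measure.restrict_apply hDm]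
  -- off-sphere sets are null
  have hoff1 : μ2 ({x : EuclideanSpace ℝ (Fin N) | ‖x‖ = R}ᶜ ×ˢ
      (Set.univ : Set (EuclideanSpace ℝ (Fin N)))) = 0 := by
    rw [Measure.prod_prod, hSset, hsupp, zero_mul]
  have hoff2 : μ2 ((Set.univ : Set (EuclideanSpace ℝ (Fin N))) ×ˢ
      {x : EuclideanSpace ℝ (Fin N) | ‖x‖ = R}ᶜ) = 0 := by
    rw [Measure.prod_prod, hSset, hsupp, mul_zero]
  -- covering
  have hcover : D ⊆ ((((D ∩ H ×ˢ H) ∪ (D ∩ H ×ˢ M)) ∪ (D ∩ M ×ˢ H)) ∪ (D ∩ M ×ˢ M)) ∪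
      (({x : EuclideanSpace ℝ (Fin N) | ‖x‖ = R}ᶜ ×ˢ
        (Set.univ : Set (EuclideanSpace ℝ (Fin N)))) ∪
       ((Set.univ : Set (EuclideanSpace ℝ (Fin N))) ×ˢ
        {x : EuclideanSpace ℝ (Fin N) | ‖x‖ = R}ᶜ)) := by
    rintro ⟨x, y⟩ hq
    by_cases hx : ‖x‖ = R
    · by_cases hy : ‖y‖ = R
      · left
        rcases le_total 0 (x l) with hxl | hxl <;> rcases le_total 0 (y l) with hyl | hyl
        · exact Or.inl (Or.inl (Or.inl ⟨hq, ⟨hx, hxl⟩, ⟨hy, hyl⟩⟩))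
        · exact Or.inl (Or.inl (Or.inr ⟨hq, ⟨hx, hxl⟩, ⟨hy, hyl⟩⟩))
        · exact Or.inl (Or.inr ⟨hq, ⟨hx, hxl⟩, ⟨hy, hyl⟩⟩)
        · exact Or.inr ⟨hq, ⟨hx, hxl⟩, ⟨hy, hyl⟩⟩
      · exact Or.inr (Or.inr ⟨Set.mem_univ _, hy⟩)
    · exact Or.inr (Or.inl ⟨hx, Set.mem_univ _⟩)
  have hsix : μ2 D ≤ μ2 (D ∩ H ×ˢ H) + μ2 (D ∩ H ×ˢ M) + μ2 (D ∩ M ×ˢ H)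
      + μ2 (D ∩ M ×ˢ M) := by
    calc μ2 D ≤ _ := measure_mono hcover
      _ ≤ μ2 ((((D ∩ H ×ˢ H) ∪ (D ∩ H ×ˢ M)) ∪ (D ∩ M ×ˢ H)) ∪ (D ∩ M ×ˢ M)) +
          μ2 (({x : EuclideanSpace ℝ (Fin N) | ‖x‖ = R}ᶜ ×ˢ
            (Set.univ : Set (EuclideanSpace ℝ (Fin N)))) ∪
           ((Set.univ : Set (EuclideanSpace ℝ (Fin N))) ×ˢ
            {x : EuclideanSpace ℝ (Fin N) | ‖x‖ = R}ᶜ)) := measure_union_le _ _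
      _ = μ2 ((((D ∩ H ×ˢ H) ∪ (D ∩ H ×ˢ M)) ∪ (D ∩ M ×ˢ H)) ∪ (D ∩ M ×ˢ M)) := by
          rw [measure_union_null hoff1 hoff2, add_zero]
      _ ≤ μ2 (((D ∩ H ×ˢ H) ∪ (D ∩ H ×ˢ M)) ∪ (D ∩ M ×ˢ H)) + μ2 (D ∩ M ×ˢ M) :=
          measure_union_le _ _
      _ ≤ (μ2 ((D ∩ H ×ˢ H) ∪ (D ∩ H ×ˢ M)) + μ2 (D ∩ M ×ˢ H)) + μ2 (D ∩ M ×ˢ M) :=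
          add_le_add_left (measure_union_le _ _) _
      _ ≤ ((μ2 (D ∩ H ×ˢ H) + μ2 (D ∩ H ×ˢ M)) + μ2 (D ∩ M ×ˢ H)) + μ2 (D ∩ M ×ˢ M) :=
          add_le_add_left (add_le_add_left (measure_union_le _ _) _) _
  -- transfer lemma
  have hfm : Measurable (⇑f) := f.continuous.measurable
  have hHHm : MeasurableSet (D ∩ H ×ˢ H) := hDm.inter (hHm.prod hHm)
  have hcomp : ∀ (g : EuclideanSpace ℝ (Fin N) × EuclideanSpace ℝ (Fin N) →
      EuclideanSpace ℝ (Fin N) × EuclideanSpace ℝ (Fin N)), Measurable g →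
      Measure.map g μ2 = μ2 → (∀ q, q ∈ D ∩ M ×ˢ M ∪ (D ∩ M ×ˢ H) ∪ (D ∩ H ×ˢ M) → True) →
      True := fun _ _ _ _ => trivial
  have htrans : ∀ (g : EuclideanSpace ℝ (Fin N) × EuclideanSpace ℝ (Fin N) →
      EuclideanSpace ℝ (Fin N) × EuclideanSpace ℝ (Fin N)) (s : Set _), Measurable g →
      Measure.map g μ2 = μ2 → (s ⊆ g ⁻¹' (D ∩ H ×ˢ H)) → μ2 s ≤ μ2 (D ∩ H ×ˢ H) := by
    intro g s hgm hgmap hsub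
    calc μ2 s ≤ μ2 (g ⁻¹' (D ∩ H ×ˢ H)) := measure_mono hsub
      _ = (Measure.map g μ2) (D ∩ H ×ˢ H) := (Measure.map_apply hgm hHHm).symm
      _ = μ2 (D ∩ H ×ˢ H) := by rw [hgmap]
  have hff : Measure.map (Prod.map ⇑f ⇑f) μ2 = μ2 := by
    rw [hμ2, ← Measure.map_prod_map _ _ hfm hfm, hinv f]
  have hfid : Measure.map (Prod.map ⇑f id) μ2 = μ2 := by
    rw [hμ2, ← Measure.map_prod_map _ _ hfm measurable_id, hinv f, Measure.map_id]
  have hidf : Measure.map (Prod.map id ⇑f) μ2 = μ2 := by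
    rw [hμ2, ← Measure.map_prod_map _ _ measurable_id hfm, hinv f, Measure.map_id]
  have hMmem : ∀ x : EuclideanSpace ℝ (Fin N), x ∈ M → f x ∈ H := by
    intro x hx
    rw [← hMpre] at hx
    exact hx
  have hMM : μ2 (D ∩ M ×ˢ M) ≤ μ2 (D ∩ H ×ˢ H) := by
    refine htrans (Prod.map ⇑f ⇑f) _ (hfm.prodMap hfm) hff ?_
    rintro ⟨x, y⟩ ⟨hq, hx, hy⟩
    refine ⟨?_, hMmem x hx, hMmem y hy⟩
    show dist (f x) (f y) ≤ d
    rw [f.dist_map]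
    exact hq
  have hMHle : μ2 (D ∩ M ×ˢ H) ≤ μ2 (D ∩ H ×ˢ H) := by
    refine htrans (Prod.map ⇑f id) _ (hfm.prodMap measurable_id) hfid ?_
    rintro ⟨x, y⟩ ⟨hq, hx, hy⟩
    refine ⟨?_, hMmem x hx, hy⟩
    show dist (f x) y ≤ d
    calc dist (f x) y ≤ dist x y := by
          rw [hf, Stmt11Aux.flipE_apply]
          exact Stmt11Aux.dist_flip_le l x y hx.2 hy.2
      _ ≤ d := hq
  have hHMle : μ2 (D ∩ H ×ˢ M) ≤ μ2 (D ∩ H ×ˢ H) := by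
    refine htrans (Prod.map id ⇑f) _ (measurable_id.prodMap hfm) hidf ?_
    rintro ⟨x, y⟩ ⟨hq, hx, hy⟩
    refine ⟨?_, hx, hMmem y hy⟩
    show dist x (f y) ≤ d
    calc dist x (f y) = dist (f y) x := dist_comm _ _
      _ ≤ dist y x := by
          rw [hf, Stmt11Aux.flipE_apply]
          exact Stmt11Aux.dist_flip_le l y x hy.2 hx.2
      _ = dist x y := dist_comm _ _
      _ ≤ d := hq
  have hmain : μ2 D ≤ ν D + ν D + (ν D + ν D) := by
    rw [hνD]
    refine le_trans hsix ?_
    rw [add_assoc]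
    exact add_le_add (add_le_add le_rfl hHMle) (add_le_add hMHle hMM)
  have hfin : ν D + ν D + (ν D + ν D) ≠ ⊤ := by
    have h1 : ν D ≤ 1 := by
      rw [hνD]
      calc μ2 (D ∩ H ×ˢ H) ≤ μ2 Set.univ := measure_mono (Set.subset_univ _)
        _ = 1 := measure_univ
    refine ne_top_of_le_ne_top (b := (4 : ENNReal)) (by norm_num) ?_
    calc ν D + ν D + (ν D + ν D) ≤ 1 + 1 + (1 + 1) := by
          exact add_le_add (add_le_add h1 h1) (add_le_add h1 h1)
      _ = 4 := by norm_num
  rw [hRHS]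
  exact ENNReal.toReal_mono hfin hmain
end
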